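/- In the balanced case, any v_k-configuration with deficiency δ = v - (k(k-1)+1) < k - 2 is irreducible. -/

import Mathlib

/-- A combinatorial `(v_r, b_k)`-configuration. -/
structure Config (P L : Type) (r k : ℕ) where
  I : P → L → Prop
  plinear : ∀ p q : P, p ≠ q → ∀ l m : L, I p l → I q l → I p m → I q m → l = m
  pointDeg : ∀ p : P, {l : L | I p l}.ncard = r
  lineDeg : ∀ l : L, {p : P | I p l}.ncard = k

/-- Boben reducibility of a balanced configuration. -/
def Reducible {P L : Type} {k : ℕ} (C : Config P L k k) : Prop :=
  ∃ (p : P) (l : L) (f' : P → L),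
    Set.MapsTo f' {q | C.I q l ∧ q ≠ p} {m | C.I p m ∧ m ≠ l} ∧
    Set.InjOn f' {q | C.I q l ∧ q ≠ p} ∧
    ∀ q, C.I q l → q ≠ p → ∀ x, C.I x (f' q) → x ≠ q → x ≠ p →
      ∀ s, C.I q s → C.I x s → s = l

/-- any balanced `v_k`-configuration with deficiency
`δ = v - (k(k-1)+1) < k - 2` is irreducible. -/
theorem balanced_small_deficiency_irreducible {P L : Type} [Fintype P] [Fintype L]
    {k : ℕ} (hk : 1 ≤ k) (C : Config P L k k)
    (hbal : Fintype.card P = Fintype.card L)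
    (hdef : (Fintype.card P : ℤ) - ((k : ℤ) * ((k : ℤ) - 1) + 1) < (k : ℤ) - 2) :
    ¬ Reducible C := by
  classical
  rcases Nat.lt_or_ge k 2 with hk2 | hk2
  · -- k = 1 : hypothesis hdef is absurd
    intro _
    interval_cases k
    have h0 : (0:ℤ) ≤ (Fintype.card P : ℤ) := Int.natCast_nonneg _
    push_cast at hdef
    linarith
  rintro ⟨p, l, f', hmap, hinj, hred⟩
  -- pick a point q on l different from p
  have hl : {x : P | C.I x l}.ncard = k := C.lineDeg l
  obtain ⟨q, hql, hqp⟩ :=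
    Set.exists_ne_of_one_lt_ncard (by rw [hl]; omega) p
  have hpm : C.I p (f' q) ∧ f' q ≠ l := hmap ⟨hql, hqp⟩
  set m := f' q with hm
  -- the set of points collinear with q (including q)
  set U : Set P := {x | ∃ s, C.I q s ∧ C.I x s} with hU
  -- the points on m avoiding p and l
  set T : Set P := {x | C.I x m} \ ({p} ∪ {x | C.I x l}) with hT
  -- every point of T is non-collinear with q
  have hTU : T ⊆ Uᶜ := by
    rintro x ⟨hxm, hx⟩ ⟨s, hqs, hxs⟩
    have hxl : ¬ C.I x l := fun h => hx (Or.inr h)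
    have hxp : x ≠ p := fun h => hx (Or.inl h)
    have hxq : x ≠ q := fun h => hxl (h ▸ hql)
    exact hxl ((hred q hql hqp x hxm hxq hxp s hqs hxs) ▸ hxs)
  -- T has at least k - 2 points
  have hTcard : k ≤ T.ncard + 2 := by
    have hsub : {x : P | C.I x m} ⊆ T ∪ ({p} ∪ ({x | C.I x m} ∩ {x | C.I x l})) := by
      intro x hxm
      by_cases hx : x ∈ ({p} : Set P) ∪ {x | C.I x l}
      · rcases hx with hx | hx
        · exact Or.inr (Or.inl hx)
        · exact Or.inr (Or.inr ⟨hxm, hx⟩)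
      · exact Or.inl ⟨hxm, hx⟩
    have hss : ({x : P | C.I x m} ∩ {x | C.I x l}).Subsingleton := by
      rintro x ⟨hxm, hxl⟩ y ⟨hym, hyl⟩
      by_contra hxy
      exact hpm.2 (C.plinear x y hxy m l hxm hym hxl hyl ▸ rfl)
    have h1 : ({x : P | C.I x m} ∩ {x | C.I x l}).ncard ≤ 1 :=
      (Set.ncard_le_one_iff (Set.toFinite _)).mpr fun ha hb => hss ha hb
    have h2 : ({p} ∪ ({x : P | C.I x m} ∩ {x | C.I x l})).ncard ≤ 2 := by
      have := Set.ncard_union_le ({p} : Set P)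
        ({x : P | C.I x m} ∩ {x | C.I x l})
      have hps : ({p} : Set P).ncard = 1 := Set.ncard_singleton p
      omega
    have h3 := Set.ncard_union_le T ({p} ∪ ({x : P | C.I x m} ∩ {x | C.I x l}))
    have h4 : {x : P | C.I x m}.ncard ≤
        (T ∪ ({p} ∪ ({x : P | C.I x m} ∩ {x | C.I x l}))).ncard :=
      Set.ncard_le_ncard hsub (Set.toFinite _)
    have h5 : {x : P | C.I x m}.ncard = k := C.lineDeg m
    omega
  -- U has at least k*(k-1) + 1 points
  have hUcard : k * (k - 1) + 1 ≤ U.ncard := by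
    have hF : {s : L | C.I q s}.ncard = k := C.pointDeg q
    set F : Finset L := {s : L | C.I q s}.toFinset with hFdef
    have hFcard : F.card = k := by
      rw [hFdef, ← Set.ncard_eq_toFinset_card']
      exact hF
    set G : Finset P := F.biUnion (fun s => ({x : P | C.I x s} \ {q}).toFinset) with hGdef
    have hGcard : G.card = k * (k - 1) := by
      rw [hGdef, Finset.card_biUnion]
      · have : ∀ s ∈ F, ({x : P | C.I x s} \ {q}).toFinset.card = k - 1 := by
          intro s hs
          have hqs : C.I q s := by
            have := (Set.mem_toFinset).mp hs
            exact this
          rw [← Set.ncard_eq_toFinset_card',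
            Set.ncard_diff_singleton_of_mem (show q ∈ {x : P | C.I x s} from hqs), C.lineDeg s]
        rw [Finset.sum_congr rfl this, Finset.sum_const, hFcard, smul_eq_mul]
      · intro s hs t ht hst
        simp only [Finset.disjoint_left, Set.mem_toFinset, Set.mem_diff,
          Set.mem_singleton_iff, Set.mem_setOf_eq]
        rintro x ⟨hxs, hxq⟩ ⟨hxt, _⟩
        have hqs : C.I q s := Set.mem_toFinset.mp hs
        have hqt : C.I q t := Set.mem_toFinset.mp ht
        exact hst (C.plinear q x (Ne.symm hxq) s t hqs hxs hqt hxt)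
    have hqG : q ∉ G := by
      intro h
      obtain ⟨s, hsF, hx⟩ := Finset.mem_biUnion.mp h
      rw [Set.mem_toFinset] at hx
      exact hx.2 rfl
    have hinsert : insert q G ⊆ U.toFinset := by
      intro x hx
      rw [Set.mem_toFinset]
      rcases Finset.mem_insert.mp hx with h | h
      · subst h
        obtain ⟨s, hs⟩ := Set.nonempty_of_ncard_ne_zero (by rw [hF]; omega)
        exact ⟨s, hs, hs⟩
      · obtain ⟨s, hsF, hxs⟩ := Finset.mem_biUnion.mp (hGdef ▸ h)
        rw [Set.mem_toFinset] at hxs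
        exact ⟨s, Set.mem_toFinset.mp hsF, hxs.1⟩
    have := Finset.card_le_card hinsert
    rw [Finset.card_insert_of_notMem hqG, hGcard] at this
    rw [Set.ncard_eq_toFinset_card']
    omega
  -- combine
  have hpart : U.ncard + Uᶜ.ncard = Fintype.card P := by
    rw [Set.ncard_add_ncard_compl U (Set.toFinite _) (Set.toFinite _),
      Nat.card_eq_fintype_card]
  have hTle : T.ncard ≤ Uᶜ.ncard := Set.ncard_le_ncard hTU (Set.toFinite _)
  have hcast : ((k * (k - 1) : ℕ) : ℤ) = (k : ℤ) * ((k : ℤ) - 1) := by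
    rw [Nat.cast_mul, Nat.cast_sub hk]
    push_cast
    ring
  have hv : (Fintype.card P : ℤ) = (U.ncard : ℤ) + (Uᶜ.ncard : ℤ) := by
    exact_mod_cast hpart.symm
  have h1 : ((k * (k - 1) : ℕ) : ℤ) + 1 ≤ (U.ncard : ℤ) := by exact_mod_cast hUcard
  have h2 : (k : ℤ) ≤ (T.ncard : ℤ) + 2 := by exact_mod_cast hTcard
  have h3 : (T.ncard : ℤ) ≤ (Uᶜ.ncard : ℤ) := by exact_mod_cast hTle
  rw [hcast] at h1
  linarith
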